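/- Let C be a ℤ_p-chain complex with fundamental-domain bases as in the context. Let h ∈ H^i_d(C) be a torsion d-cohomology class and suppose h = [sφ]_d, where sφ is a cocycle of C*_d and the cochain φ ∈ C^i vanishes on t^kσ for all σ ∈ F_i and all 1 ≤ k ≤ p−1. Then h ≠ 0 if and only if there exist an integer n ≥ 2 and a chain c ∈ C_i lying in the ℤ-span of F_i such that s∂c ∈ n·C_{i−1} and φ(c) is not divisible by n (for such c one has φ(sc) = φ(c)). -/

import Mathlib

/-- A `ℤ_p`-chain complex (in nonnegative degrees) whose degree-`n` chain group is the
finitely generated free ℤ-module with basis `{t^k σ : σ ∈ F n, 0 ≤ k ≤ p−1}`, i.e. the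
free ℤ-module on `F n × ZMod p`; the action of `t` cyclically permutes the basis, and
commutes with the boundary. Equivalently, each chain group is a finitely generated free
`ℤ[ℤ/pℤ]`-module with the generator of `ℤ/pℤ` acting as `t`. -/
structure ZpFreeComplex (p : ℕ) where
  F : ℕ → Type
  fin : ∀ n, Fintype (F n)
  bd : ∀ n, ((F (n + 1) × ZMod p → ℤ) →+ (F n × ZMod p → ℤ))
  bd_bd : ∀ n x, bd n (bd (n + 1) x) = 0
  bd_t : ∀ n (c : F (n + 1) × ZMod p → ℤ),
    bd n (fun z => c (z.1, z.2 - 1)) = fun z => bd n c (z.1, z.2 - 1)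

namespace ZpFreeComplex

variable {p : ℕ} (X : ZpFreeComplex p)

/-- degree-`n` chains -/
abbrev Ch (n : ℕ) := X.F n × ZMod p → ℤ

/-- degree-`n` integral cochains -/
abbrev Co (n : ℕ) := (X.F n × ZMod p → ℤ) →+ ℤ

/-- the chain map `t^k` -/
def tCh (n k : ℕ) : X.Ch n →+ X.Ch n where
  toFun c := fun z => c (z.1, z.2 - (k : ZMod p))
  map_zero' := rfl
  map_add' _ _ := rfl

/-- `s = 1 + t + ⋯ + t^{p−1}` on chains -/
def sCh (n : ℕ) : X.Ch n →+ X.Ch n := ∑ k ∈ Finset.range p, X.tCh n k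

/-- `d = 1 − t` on chains -/
def dCh (n : ℕ) : X.Ch n →+ X.Ch n := AddMonoidHom.id _ - X.tCh n 1

/-- the cochain map `t^k`, `φ ↦ φ ∘ t^k` -/
def tCo (n k : ℕ) : X.Co n →+ X.Co n where
  toFun φ := φ.comp (X.tCh n k)
  map_zero' := by ext x; simp
  map_add' _ _ := by ext x; simp

/-- `s = 1 + t + ⋯ + t^{p−1}` on cochains -/
def sCo (n : ℕ) : X.Co n →+ X.Co n where
  toFun φ := φ.comp (X.sCh n)
  map_zero' := by ext x; simp
  map_add' _ _ := by ext x; simp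

/-- `d = 1 − t` on cochains -/
def dCo (n : ℕ) : X.Co n →+ X.Co n where
  toFun φ := φ.comp (X.dCh n)
  map_zero' := by ext x; simp
  map_add' _ _ := by ext x; simp

/-- the coboundary `δφ = φ ∘ ∂` -/
def cb (n : ℕ) : X.Co n →+ X.Co (n + 1) where
  toFun φ := φ.comp (X.bd n)
  map_zero' := by ext x; simp
  map_add' _ _ := by ext x; simp

/-- the boundary out of degree `n` (the zero map in degree 0). -/
def bdFrom : ∀ n : ℕ, (X.Ch n →+ X.Ch (n - 1))
  | 0 => 0
  | (j + 1) => X.bd j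

lemma tCh_one (n : ℕ) (c : X.Ch n) : X.tCh n 1 c = fun z => c (z.1, z.2 - 1) := by
  funext z
  simp [tCh]

lemma tCh_succ (n k : ℕ) (c : X.Ch n) :
    X.tCh n (k + 1) c = X.tCh n 1 (X.tCh n k c) := by
  funext z
  show c (z.1, z.2 - ((k + 1 : ℕ) : ZMod p)) = c (z.1, z.2 - ((1 : ℕ) : ZMod p) - ((k : ℕ) : ZMod p))
  have h2 : z.2 - ((k + 1 : ℕ) : ZMod p) = z.2 - ((1 : ℕ) : ZMod p) - ((k : ℕ) : ZMod p) := by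
    push_cast
    ring
  rw [h2]

lemma tCh_zero (n : ℕ) (c : X.Ch n) : X.tCh n 0 c = c := by
  funext z
  simp [tCh]

lemma bd_tCh (n k : ℕ) (c : X.Ch (n + 1)) :
    X.bd n (X.tCh (n + 1) k c) = X.tCh n k (X.bd n c) := by
  induction k with
  | zero => rw [tCh_zero, tCh_zero]
  | succ k ih =>
      rw [X.tCh_succ (n + 1) k c, X.tCh_succ n k (X.bd n c)]
      rw [X.tCh_one (n + 1) (X.tCh (n + 1) k c)]
      rw [X.bd_t n (X.tCh (n + 1) k c)]
      rw [ih]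
      rw [← X.tCh_one n (X.tCh n k (X.bd n c))]

lemma bd_sCh (n : ℕ) (c : X.Ch (n + 1)) :
    X.bd n (X.sCh (n + 1) c) = X.sCh n (X.bd n c) := by
  simp only [sCh, AddMonoidHom.finset_sum_apply, map_sum, bd_tCh]

lemma bd_dCh (n : ℕ) (c : X.Ch (n + 1)) :
    X.bd n (X.dCh (n + 1) c) = X.dCh n (X.bd n c) := by
  simp only [dCh, AddMonoidHom.sub_apply, AddMonoidHom.id_apply, map_sub, bd_tCh]

end ZpFreeComplex

namespace ZpFreeComplex

variable {p : ℕ} (X : ZpFreeComplex p)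

/-- cocycles of the `d`-cochain complex `C*_d = ker d ⊆ C*` -/
def dcocycles (n : ℕ) : AddSubgroup (X.Co n) := (X.dCo n).ker ⊓ (X.cb n).ker

/-- coboundaries of the `d`-cochain complex -/
def dcobds : ∀ n : ℕ, AddSubgroup (X.Co n)
  | 0 => ⊥
  | (j + 1) => AddSubgroup.map (X.cb j) ((X.dCo j).ker)

/-- the `d`-cohomology `H^n_d` -/
abbrev Hd (n : ℕ) := X.dcocycles n ⧸ (X.dcobds n).addSubgroupOf (X.dcocycles n)

/-- the `d`-cohomology class `[φ]_d` of a cocycle of `C*_d` -/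
def clsd (n : ℕ) (φ : X.Co n) (h : φ ∈ X.dcocycles n) : X.Hd n :=
  QuotientAddGroup.mk ⟨φ, h⟩

/-- cocycles of the `s`-cochain complex `C*_s = ker s ⊆ C*` -/
def scocycles (n : ℕ) : AddSubgroup (X.Co n) := (X.sCo n).ker ⊓ (X.cb n).ker

/-- coboundaries of the `s`-cochain complex -/
def scobds : ∀ n : ℕ, AddSubgroup (X.Co n)
  | 0 => ⊥
  | (j + 1) => AddSubgroup.map (X.cb j) ((X.sCo j).ker)

/-- the `s`-cohomology `H^n_s` -/
abbrev Hs (n : ℕ) := X.scocycles n ⧸ (X.scobds n).addSubgroupOf (X.scocycles n)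

/-- the `s`-cohomology class `[φ]_s` of a cocycle of `C*_s` -/
def clss (n : ℕ) (φ : X.Co n) (h : φ ∈ X.scocycles n) : X.Hs n :=
  QuotientAddGroup.mk ⟨φ, h⟩

/-- the boundary of the `d`-chain complex `C^d = ker d ⊆ C`, i.e. the restriction
of the boundary of `C`. -/
def bdD (n : ℕ) : ↥((X.dCh (n + 1)).ker) →+ ↥((X.dCh n).ker) :=
  AddMonoidHom.codRestrict ((X.bd n).comp (X.dCh (n + 1)).ker.subtype) ((X.dCh n).ker)
    (fun x => by
      have hx : X.dCh (n + 1) (x : X.Ch (n + 1)) = 0 := x.2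
      simp only [AddMonoidHom.mem_ker, AddMonoidHom.coe_comp, AddSubgroup.coe_subtype,
        Function.comp_apply]
      rw [← bd_dCh, hx, map_zero])

/-- the boundary of the `s`-chain complex `C^s = ker s ⊆ C`, i.e. the restriction
of the boundary of `C`. -/
def bdS (n : ℕ) : ↥((X.sCh (n + 1)).ker) →+ ↥((X.sCh n).ker) :=
  AddMonoidHom.codRestrict ((X.bd n).comp (X.sCh (n + 1)).ker.subtype) ((X.sCh n).ker)
    (fun x => by
      have hx : X.sCh (n + 1) (x : X.Ch (n + 1)) = 0 := x.2
      simp only [AddMonoidHom.mem_ker, AddMonoidHom.coe_comp, AddSubgroup.coe_subtype,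
        Function.comp_apply]
      rw [← bd_sCh, hx, map_zero])

lemma cb_dCo (n : ℕ) (φ : X.Co n) :
    X.cb n (X.dCo n φ) = X.dCo (n + 1) (X.cb n φ) := by
  ext x
  show (X.dCo n φ) (X.bd n x) = (X.cb n φ) (X.dCh (n + 1) x)
  show φ (X.dCh n (X.bd n x)) = φ (X.bd n (X.dCh (n + 1) x))
  rw [bd_dCh]

lemma cb_sCo (n : ℕ) (φ : X.Co n) :
    X.cb n (X.sCo n φ) = X.sCo (n + 1) (X.cb n φ) := by
  ext x
  show φ (X.sCh n (X.bd n x)) = φ (X.bd n (X.sCh (n + 1) x))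
  rw [bd_sCh]

/-- the coboundary of `C*_d`, i.e. the restriction of the coboundary of `C*`. -/
def cbD (n : ℕ) : ↥((X.dCo n).ker) →+ ↥((X.dCo (n + 1)).ker) :=
  AddMonoidHom.codRestrict ((X.cb n).comp (X.dCo n).ker.subtype) ((X.dCo (n + 1)).ker)
    (fun φ => by
      have hφ : X.dCo n (φ : X.Co n) = 0 := φ.2
      simp only [AddMonoidHom.mem_ker, AddMonoidHom.coe_comp, AddSubgroup.coe_subtype,
        Function.comp_apply]
      rw [← cb_dCo, hφ, map_zero])

end ZpFreeComplex

open ZpFreeComplex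

lemma ext_lemma {A : Type*} [AddCommGroup A] [Module ℤ A] {ι' : Type} [Fintype ι'] [DecidableEq ι']
    (L : A →ₗ[ℤ] (ι' → ℤ)) (f : A →ₗ[ℤ] ℤ)
    (hdiv : ∀ (n : ℕ) (c : A), (∃ w, L c = (n : ℤ) • w) → (n : ℤ) ∣ f c) :
    ∃ θ : (ι' → ℤ) →ₗ[ℤ] ℤ, ∀ c, θ (L c) = f c := by
  classical
  obtain ⟨n, snf⟩ := (LinearMap.range L).smithNormalForm (Pi.basisFun ℤ ι')
  obtain ⟨bM, bN, emb, a, hsnf⟩ := snf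
  -- choose preimages
  have hmem : ∀ j : Fin n, ∃ c : A, L c = (bN j : ι' → ℤ) := fun j => (bN j).2
  choose cj hcj using hmem
  -- f vanishes on ker L
  have hker : ∀ c : A, L c = 0 → f c = 0 := by
    intro c hc
    have := hdiv 0 c ⟨0, by simp [hc]⟩
    simpa using this
  -- divisibility
  have hdvd : ∀ j, a j ∣ f (cj j) := by
    intro j
    rw [← Int.natAbs_dvd]
    apply hdiv
    rcases Int.natAbs_eq (a j) with h | h
    · exact ⟨bM (emb j), by rw [hcj, hsnf, ← h]⟩
    · exact ⟨-bM (emb j), by rw [hcj, hsnf]; rw [smul_neg, ← neg_smul, ← h]⟩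
  set t : Fin n → ℤ := fun j => f (cj j) / a j with ht
  set θ : (ι' → ℤ) →ₗ[ℤ] ℤ := bM.constr ℤ (Function.extend emb t 0) with hθ
  have hθbN : ∀ j, θ (bN j : ι' → ℤ) = f (cj j) := by
    intro j
    rw [hsnf, map_smul, hθ, Module.Basis.constr_basis, Function.Injective.extend_apply emb.injective,
      smul_eq_mul, ht]
    exact Int.mul_ediv_cancel' (hdvd j)
  refine ⟨θ, fun c => ?_⟩
  set x : LinearMap.range L := ⟨L c, LinearMap.mem_range_self L c⟩ with hx
  have hrep : (x : ι' → ℤ) = ∑ j, bN.repr x j • (bN j : ι' → ℤ) := by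
    conv_lhs => rw [← bN.sum_repr x]
    push_cast
    rfl
  set c' : A := ∑ j, bN.repr x j • cj j with hc'
  have hLc' : L c' = L c := by
    have h1 : L c' = ∑ j, bN.repr x j • (bN j : ι' → ℤ) := by
      rw [hc', map_sum]
      exact Finset.sum_congr rfl fun j _ => by rw [map_zsmul, hcj]
    rw [h1, ← hrep]
  have hfc : f c = f c' := by
    have h0 : f (c - c') = 0 := hker _ (by rw [map_sub, hLc', sub_self])
    rw [map_sub] at h0; linarith
  calc θ (L c) = θ (x : ι' → ℤ) := rfl
    _ = ∑ j, bN.repr x j • θ (bN j : ι' → ℤ) := by rw [hrep, map_sum]; exact Finset.sum_congr rfl fun j _ => θ.map_smul _ _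
    _ = ∑ j, bN.repr x j • f (cj j) := by simp_rw [hθbN]
    _ = f c' := by rw [hc', map_sum]; exact Finset.sum_congr rfl fun j _ => (map_zsmul f _ _).symm
    _ = f c := hfc.symm

section Aux

lemma zmod_sum_range {p : ℕ} [NeZero p] {M : Type*} [AddCommMonoid M] (g : ZMod p → M) :
    ∑ k ∈ Finset.range p, g (k : ZMod p) = ∑ m : ZMod p, g m := by
  exact Finset.sum_nbij' (fun k => (k : ZMod p)) (fun m => m.val)
    (fun k _ => Finset.mem_univ _)
    (fun m _ => Finset.mem_range.mpr (ZMod.val_lt m))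
    (fun k hk => ZMod.val_cast_of_lt (Finset.mem_range.mp hk))
    (fun m _ => ZMod.natCast_zmod_val m)
    (fun k _ => rfl)

namespace ZpFreeComplex

variable {p : ℕ} (X : ZpFreeComplex p)

instance (n : ℕ) : Fintype (X.F n) := X.fin n

lemma sCh_apply [NeZero p] (n : ℕ) (c : X.Ch n) (z : X.F n × ZMod p) :
    X.sCh n c z = ∑ m : ZMod p, c (z.1, m) := by
  have h1 : X.sCh n c z = ∑ k ∈ Finset.range p, c (z.1, z.2 - (k : ZMod p)) := by
    rw [sCh, AddMonoidHom.finset_sum_apply, Finset.sum_apply]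
    rfl
  rw [h1, zmod_sum_range (fun m => c (z.1, z.2 - m))]
  exact Fintype.sum_equiv (Equiv.subLeft z.2) _ _ (fun m => rfl)

lemma sCh_tCh [NeZero p] (n k : ℕ) (c : X.Ch n) :
    X.sCh n (X.tCh n k c) = X.sCh n c := by
  funext z
  rw [sCh_apply, sCh_apply]
  show ∑ m : ZMod p, c (z.1, m - (k : ZMod p)) = ∑ m : ZMod p, c (z.1, m)
  exact Fintype.sum_equiv (Equiv.subRight (k : ZMod p)) _ _ (fun m => rfl)

lemma sCh_dCh [NeZero p] (n : ℕ) (c : X.Ch n) :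
    X.sCh n (X.dCh n c) = 0 := by
  have : X.dCh n c = c - X.tCh n 1 c := rfl
  rw [this, map_sub, sCh_tCh, sub_self]

/-- decomposition of an additive map on chains via Pi.single -/
lemma co_apply_sum [NeZero p] [DecidableEq (X.F i)] {M : Type*} [AddCommGroup M]
    (g : X.Ch i →+ M) (c : X.Ch i) :
    g c = ∑ z : X.F i × ZMod p, c z • g (Pi.single z (1 : ℤ)) := by
  have hc : c = ∑ z : X.F i × ZMod p, c z • Pi.single z (1 : ℤ) := by
    funext w
    rw [Finset.sum_apply]
    have : ∀ z : X.F i × ZMod p, (c z • (Pi.single z (1:ℤ) : X.Ch i)) w = if w = z then c z else 0 := by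
      intro z
      by_cases h : w = z <;> simp [Pi.single_apply, h]
    simp_rw [this]
    simp
  conv_lhs => rw [hc]
  rw [map_sum]
  exact Finset.sum_congr rfl fun z _ => map_zsmul g _ _

lemma tCh_single [NeZero p] [DecidableEq (X.F i)] (k : ℕ) (σ : X.F i) (a : ZMod p) :
    X.tCh i k (Pi.single (σ, a) (1 : ℤ)) = Pi.single (σ, a + k) (1 : ℤ) := by
  funext z
  show (Pi.single (σ, a) (1:ℤ) : X.Ch i) (z.1, z.2 - k) = (Pi.single (σ, a + (k : ZMod p)) (1:ℤ) : X.Ch i) z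
  rcases z with ⟨τ, m⟩
  by_cases h1 : τ = σ
  · subst h1
    by_cases h2 : m = a + k
    · subst h2; simp [Pi.single_apply]
    · have h3 : m - k ≠ a := fun h => h2 (by rw [← h]; ring)
      simp [Pi.single_apply, Prod.ext_iff, h2, h3]
  · simp [Pi.single_apply, Prod.ext_iff, h1]

/-- a `d`-closed cochain is `t`-invariant -/
lemma dclosed_t_inv (ψ : X.Co n) (hψ : X.dCo n ψ = 0) (k : ℕ) (x : X.Ch n) :
    ψ (X.tCh n k x) = ψ x := by
  induction k with
  | zero => rw [tCh_zero]
  | succ k ih =>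
      rw [tCh_succ]
      have h1 : ∀ y, ψ (X.tCh n 1 y) = ψ y := by
        intro y
        have := congrArg (fun g : X.Co n => g y) hψ
        simp only [AddMonoidHom.zero_apply] at this
        have h2 : ψ (X.dCh n y) = 0 := this
        have h3 : X.dCh n y = y - X.tCh n 1 y := rfl
        rw [h3, map_sub] at h2
        linarith
      rw [h1, ih]

/-- key formula: a `d`-closed cochain factors through `s` with coefficients on the
fundamental domain. -/
lemma dclosed_eq_sum [NeZero p] [DecidableEq (X.F n)] (ψ : X.Co n) (hψ : X.dCo n ψ = 0)
    (x : X.Ch n) :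
    ψ x = ∑ σ : X.F n, (X.sCh n x) (σ, 0) * ψ (Pi.single (σ, (0:ZMod p)) (1:ℤ)) := by
  rw [X.co_apply_sum ψ x, Fintype.sum_prod_type]
  apply Finset.sum_congr rfl
  intro σ _
  rw [sCh_apply, Finset.sum_mul]
  apply Finset.sum_congr rfl
  intro m _
  have h1 : Pi.single (σ, m) (1:ℤ) = X.tCh n m.val (Pi.single (σ, (0:ZMod p)) 1) := by
    rw [X.tCh_single]
    rw [zero_add, ZMod.natCast_zmod_val]
  rw [h1, X.dclosed_t_inv ψ hψ, smul_eq_mul]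

end ZpFreeComplex

end Aux


/-- **Certificate for a non-trivial `d`-cohomology class.**
Let `K` be a `ℤ_p`-chain complex with fundamental-domain bases (degree-`n` chain group
free on `{t^k σ : σ ∈ F_n, 0 ≤ k ≤ p−1}`, modelled as `F n × ZMod p → ℤ` with `t`
cyclically shifting the second coordinate).  Let `h ∈ H^i_d(K)` be a torsion
`d`-cohomology class with `h = [sφ]_d`, where `sφ` is a cocycle of `C*_d` and `φ`
vanishes on `t^k σ` for all `σ ∈ F_i`, `1 ≤ k ≤ p−1`.  Then `h ≠ 0` iff there are an
integer `n ≥ 2` and a chain `c` in the ℤ-span of `F_i` with `s ∂c ∈ n·C_{i−1}` and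
`φ(c)` not divisible by `n`; moreover for such `c` one has `φ(sc) = φ(c)`. -/
theorem certificate_for_nontrivial_d_class
    (p : ℕ) (hp : p.Prime) (X : ZpFreeComplex p) [∀ n, DecidableEq (X.F n)]
    (i : ℕ) (φ : X.Co i)
    (hsupp : ∀ (σ : X.F i) (k : ZMod p), k ≠ 0 → φ (Pi.single (σ, k) (1 : ℤ)) = 0)
    (hmem : X.sCo i φ ∈ X.dcocycles i)
    (h : X.Hd i) (hrep : X.clsd i (X.sCo i φ) hmem = h)
    (htor : ∃ k : ℕ, 1 ≤ k ∧ k • h = 0) :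
    (h ≠ 0 ↔
      ∃ n : ℕ, 2 ≤ n ∧
        ∃ c : X.Ch i,
          (∀ (σ : X.F i) (k : ZMod p), k ≠ 0 → c (σ, k) = 0) ∧
          (∃ w : X.Ch (i - 1), X.sCh (i - 1) (X.bdFrom i c) = (n : ℤ) • w) ∧
          ¬ ((n : ℤ) ∣ φ c))
    ∧ (∀ c : X.Ch i,
        (∀ (σ : X.F i) (k : ZMod p), k ≠ 0 → c (σ, k) = 0) →
        φ (X.sCh i c) = φ c) := by
  haveI : NeZero p := ⟨hp.pos.ne'⟩
  classical
  set α := X.sCo i φ with hα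
  -- Part 2 : φ (s c) = φ c for c supported on the fundamental domain
  have part2 : ∀ c : X.Ch i,
      (∀ (σ : X.F i) (k : ZMod p), k ≠ 0 → c (σ, k) = 0) → φ (X.sCh i c) = φ c := by
    intro c hc
    rw [X.co_apply_sum φ (X.sCh i c), X.co_apply_sum φ c, Fintype.sum_prod_type,
      Fintype.sum_prod_type]
    refine Finset.sum_congr rfl fun σ _ => ?_
    rw [Finset.sum_eq_single (0 : ZMod p)
        (fun m _ hm => by rw [hsupp σ m hm, smul_zero])
        (fun habs => absurd (Finset.mem_univ _) habs),
      Finset.sum_eq_single (0 : ZMod p)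
        (fun m _ hm => by rw [hsupp σ m hm, smul_zero])
        (fun habs => absurd (Finset.mem_univ _) habs)]
    have h1 : X.sCh i c (σ, 0) = c (σ, 0) := by
      rw [X.sCh_apply]
      exact Finset.sum_eq_single (0 : ZMod p)
        (fun m _ hm => hc σ m hm) (fun habs => absurd (Finset.mem_univ _) habs)
    rw [h1]
  -- h = 0 iff α is a coboundary of the d-complex
  have hzero_iff : h = 0 ↔ α ∈ X.dcobds i := by
    rw [← hrep]
    show (QuotientAddGroup.mk ⟨α, hmem⟩ : X.Hd i) = 0 ↔ _
    rw [QuotientAddGroup.eq_zero_iff]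
    exact AddSubgroup.mem_addSubgroupOf
  -- Direction A : if h = 0 then every candidate certificate fails
  have dirA : h = 0 → ∀ n : ℕ, ∀ c : X.Ch i,
      (∀ (σ : X.F i) (k : ZMod p), k ≠ 0 → c (σ, k) = 0) →
      (∃ w : X.Ch (i - 1), X.sCh (i - 1) (X.bdFrom i c) = (n : ℤ) • w) →
      (n : ℤ) ∣ φ c := by
    intro h0 n c hcspan hw
    obtain ⟨w, hw⟩ := hw
    have hφc : φ c = α c := (part2 c hcspan).symm
    rw [hzero_iff] at h0
    cases i with
    | zero =>
        have hb : α = 0 := by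
          have : α ∈ (⊥ : AddSubgroup (X.Co 0)) := h0
          exact AddSubgroup.mem_bot.mp this
        rw [hφc, hb]
        simp
    | succ j =>
        obtain ⟨ψ, hψker, hψ⟩ := h0
        have h1 : α c = ψ (X.bd j c) := by rw [← hψ]; rfl
        rw [hφc, h1, X.dclosed_eq_sum ψ (by exact hψker) (X.bd j c)]
        have h2 : X.sCh j (X.bd j c) = (n : ℤ) • w := hw
        rw [h2]
        refine ⟨∑ σ : X.F j, w (σ, (0 : ZMod p)) * ψ (Pi.single (σ, (0 : ZMod p)) 1), ?_⟩
        rw [Finset.mul_sum]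
        refine Finset.sum_congr rfl fun σ _ => ?_
        show ((n : ℤ) • w) (σ, 0) * _ = _
        rw [Pi.smul_apply, smul_eq_mul, mul_assoc]
  -- Direction B : if h ≠ 0 then a certificate exists
  have dirB : h ≠ 0 → ∃ n : ℕ, 2 ≤ n ∧
      ∃ c : X.Ch i,
        (∀ (σ : X.F i) (k : ZMod p), k ≠ 0 → c (σ, k) = 0) ∧
        (∃ w : X.Ch (i - 1), X.sCh (i - 1) (X.bdFrom i c) = (n : ℤ) • w) ∧
        ¬ ((n : ℤ) ∣ φ c) := by
    intro hne
    by_contra hno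
    push_neg at hno
    obtain ⟨k, hk1, hk0⟩ := htor
    have hkmem : k • α ∈ X.dcobds i := by
      have hstep : (QuotientAddGroup.mk (k • (⟨α, hmem⟩ : X.dcocycles i)) : X.Hd i) = k • h := by
        rw [← hrep]
        exact map_nsmul (QuotientAddGroup.mk' _) _ _
      rw [hk0, QuotientAddGroup.eq_zero_iff, AddSubgroup.mem_addSubgroupOf] at hstep
      simpa using hstep
    cases i with
    | zero =>
        apply hne
        rw [hzero_iff]
        have hb : k • α = 0 := AddSubgroup.mem_bot.mp hkmem
        have hzero : α = 0 := by
          apply AddMonoidHom.ext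
          intro x
          have hx := congrArg (fun g : X.Co 0 => g x) hb
          have h1 : (k : ℤ) * α x = 0 := by simpa using hx
          have hk : (k : ℤ) ≠ 0 := by exact_mod_cast Nat.one_le_iff_ne_zero.mp hk1
          show α x = 0
          exact (mul_eq_zero.mp h1).resolve_left hk
        rw [hzero]
        exact AddSubgroup.zero_mem _
    | succ j =>
        have hk2 : 2 ≤ k := by
          rcases Nat.lt_or_ge k 2 with h2 | h2
          · exfalso
            apply hne
            rw [hzero_iff]
            have hk1' : k = 1 := le_antisymm (Nat.lt_succ_iff.mp h2) hk1
            rw [hk1', one_nsmul] at hkmem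
            exact hkmem
          · exact h2
        obtain ⟨ψ, hψker, hψ⟩ := hkmem
        have hψd : X.dCo j ψ = 0 := hψker
        have hαd : X.dCo (j + 1) α = 0 := hmem.1
        -- the linear-algebra setup
        set ιL : (X.F (j+1) → ℤ) →ₗ[ℤ] X.Ch (j+1) :=
          { toFun := fun c z => if z.2 = 0 then c z.1 else 0
            map_add' := by intro a b; funext z; by_cases hz : z.2 = 0 <;> simp [hz]
            map_smul' := by intro a b; funext z; by_cases hz : z.2 = 0 <;> simp [hz] } with hιL
        have hι_span : ∀ c : X.F (j+1) → ℤ, ∀ (σ : X.F (j+1)) (m : ZMod p), m ≠ 0 →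
            (ιL c) (σ, m) = 0 := by
          intro c σ m hm
          show (if m = 0 then c σ else 0) = 0
          rw [if_neg hm]
        have hι_single : ∀ σ : X.F (j+1),
            ιL (Pi.single σ (1:ℤ)) = Pi.single (σ, (0 : ZMod p)) (1:ℤ) := by
          intro σ
          funext z
          rcases z with ⟨τ, m⟩
          show (if m = 0 then (Pi.single σ (1:ℤ) : X.F (j+1) → ℤ) τ else 0)
              = (Pi.single (σ, (0 : ZMod p)) (1:ℤ) : X.Ch (j+1)) (τ, m)
          by_cases hm : m = 0
          · subst hm
            by_cases hτ : τ = σ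
            · subst hτ; simp [Pi.single_apply]
            · simp [Pi.single_apply, Prod.ext_iff, hτ]
          · rw [if_neg hm]
            simp [Pi.single_apply, Prod.ext_iff, hm]
        set L : (X.F (j+1) → ℤ) →ₗ[ℤ] (X.F j × ZMod p → ℤ) :=
          (((X.sCh j).comp (X.bd j)).toIntLinearMap).comp ιL with hL
        set f : (X.F (j+1) → ℤ) →ₗ[ℤ] ℤ := (α.toIntLinearMap).comp ιL with hf
        have hLc : ∀ c, L c = X.sCh j (X.bd j (ιL c)) := fun c => rfl
        have hfc : ∀ c, f c = φ (ιL c) := by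
          intro c
          show α (ιL c) = φ (ιL c)
          exact part2 (ιL c) (hι_span c)
        -- divisibility hypothesis for the extension lemma
        have hdiv : ∀ (n : ℕ) (c : X.F (j+1) → ℤ),
            (∃ w, L c = (n : ℤ) • w) → (n : ℤ) ∣ f c := by
          intro n c hw
          obtain ⟨w, hw⟩ := hw
          rcases Nat.eq_zero_or_pos n with hn | hn
          · subst hn
            -- L c = 0, deduce k * f c = 0 hence f c = 0
            push_cast at hw
            simp only [zero_smul] at hw
            have h1 : (k • α) (ιL c) = ψ (X.bd j (ιL c)) := by rw [← hψ]; rfl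
            rw [X.dclosed_eq_sum ψ hψd (X.bd j (ιL c))] at h1
            have h2 : ∀ σ : X.F j, X.sCh j (X.bd j (ιL c)) (σ, (0:ZMod p)) = 0 := by
              intro σ
              rw [← hLc, hw]
              rfl
            simp only [h2, zero_mul, Finset.sum_const_zero] at h1
            have h3 : (k : ℤ) * α (ιL c) = 0 := by
              rw [← h1]
              simp
            have hk : (k : ℤ) ≠ 0 := by positivity
            have h4 : f c = 0 := (mul_eq_zero.mp h3).resolve_left hk
            simp [h4]
          · rcases Nat.lt_or_ge n 2 with hn2 | hn2
            · interval_cases n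
              · simp
            · have := hno n hn2 (ιL c) (hι_span c) ⟨w, hw⟩
              rw [hfc]
              exact this
        obtain ⟨θ, hθ⟩ := ext_lemma L f hdiv
        -- build the primitive ψ' = θ ∘ s
        set ψ' : X.Co j := (θ.toAddMonoidHom).comp (X.sCh j) with hψ'
        have hψ'd : X.dCo j ψ' = 0 := by
          apply AddMonoidHom.ext
          intro x
          show θ (X.sCh j (X.dCh j x)) = 0
          rw [X.sCh_dCh, map_zero]
        apply hne
        rw [hzero_iff]
        refine ⟨ψ', hψ'd, ?_⟩
        -- show cb j ψ' = α by checking on basis elements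
        have ext_single : ∀ g₁ g₂ : X.Co (j+1),
            (∀ z : X.F (j+1) × ZMod p, g₁ (Pi.single z (1:ℤ)) = g₂ (Pi.single z (1:ℤ))) →
            g₁ = g₂ := by
          intro g₁ g₂ hg
          apply AddMonoidHom.ext
          intro x
          rw [X.co_apply_sum g₁ x, X.co_apply_sum g₂ x]
          exact Finset.sum_congr rfl fun z _ => by rw [hg]
        refine ext_single _ _ ?_
        rintro ⟨σ, m⟩
        have hsingle : (Pi.single (σ, m) (1:ℤ) : X.Ch (j+1)) =
            X.tCh (j+1) m.val (Pi.single (σ, (0 : ZMod p)) (1:ℤ)) := by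
          rw [X.tCh_single, zero_add, ZMod.natCast_zmod_val]
        have lhs_eq : (X.cb j ψ') (Pi.single (σ, m) (1:ℤ)) = f (Pi.single σ (1:ℤ)) := by
          show θ (X.sCh j (X.bd j (Pi.single (σ, m) (1:ℤ)))) = f (Pi.single σ (1:ℤ))
          rw [hsingle, X.bd_tCh, X.sCh_tCh, ← hι_single, ← hLc]
          exact hθ _
        have rhs_eq : α (Pi.single (σ, m) (1:ℤ)) = f (Pi.single σ (1:ℤ)) := by
          rw [hsingle, X.dclosed_t_inv α hαd]
          show α (Pi.single (σ, (0:ZMod p)) (1:ℤ)) = α (ιL (Pi.single σ (1:ℤ)))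
          rw [hι_single]
        rw [lhs_eq, rhs_eq]
  refine ⟨⟨dirB, fun hex => ?_⟩, part2⟩
  obtain ⟨n, hn2, c, hcspan, hw, hndvd⟩ := hex
  intro h0
  exact hndvd (dirA h0 n c hcspan hw)
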